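/- In the suffix tree of a backward trie, if a node V has a soft W-link for character a, then V has a proper descendant U (U ≠ V) that has a hard W-link for a; moreover the highest such descendant U is unique, and for every node Z on the path from V down to U, the W-link of Z for a points to the same node as the W-link of U, namely the explicit node aU. -/

import Mathlib

/-- A rooted labeled tree on `n` nodes: node `0` is the root, every non-root
node `v` has a parent with smaller index, and `label v` is the character on
the edge between `v` and its parent. -/
structure LTree (n : ℕ) (A : Type*) where
  parent : Fin n → Fin n
  label : Fin n → A
  hp : ∀ v : Fin n, v.val ≠ 0 → (parent v).val < v.val

namespace LTree

variable {n : ℕ} {A : Type*}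

/-- The string spelled by the path from node `v` up to the root
(read in the leaf-to-root direction). -/
def strUp (T : LTree n A) (v : Fin n) : List A :=
  if h : v.val = 0 then []
  else T.label v :: T.strUp (T.parent v)
termination_by v.val
decreasing_by exact T.hp v h

/-- Substrings of the backward trie: strings spelled by upward paths from a
node to one of its ancestors (prefixes of the upward root-paths). -/
def SubstrU (T : LTree n A) : Set (List A) :=
  { s | ∃ (v : Fin n) (m : ℕ), s = (T.strUp v).take m }

/-- Substrings of the forward trie: strings spelled by downward paths from a
node to one of its descendants. -/
def SubstrD (T : LTree n A) : Set (List A) :=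
  { s | ∃ (v : Fin n) (m : ℕ), s = ((T.strUp v).take m).reverse }

/-- A node is a leaf if no (non-root) node has it as parent. -/
def isLeaf (T : LTree n A) (v : Fin n) : Prop :=
  ∀ u : Fin n, u.val ≠ 0 → T.parent u ≠ v

/-- Suffixes of the forward trie: strings spelled by downward paths from any
node to a leaf below it. -/
def SuffixF (T : LTree n A) : Set (List A) :=
  { s | ∃ v : Fin n, T.isLeaf v ∧ ∃ m : ℕ, s = ((T.strUp v).take m).reverse }

/-- Suffixes of the backward trie: strings spelled by the paths from any
non-root node up to the root. -/
def SuffixB (T : LTree n A) : Set (List A) :=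
  { s | ∃ v : Fin n, v.val ≠ 0 ∧ s = T.strUp v }

/-- The trie condition: out-going edges of each node (equivalently, edges to
the children of each node) carry mutually distinct characters. -/
def isTrie (T : LTree n A) : Prop :=
  ∀ u v : Fin n, u.val ≠ 0 → v.val ≠ 0 →
    T.parent u = T.parent v → T.label u = T.label v → u = v

/-- `X` is right-maximal on the forward trie: it has two distinct right
extensions, or an occurrence ending at a leaf. -/
def rightMaximalF (T : LTree n A) (X : List A) : Prop :=
  (∃ a b : A, a ≠ b ∧ X ++ [a] ∈ T.SubstrD ∧ X ++ [b] ∈ T.SubstrD) ∨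
  (∃ v : Fin n, T.isLeaf v ∧ ∃ m : ℕ, X = ((T.strUp v).take m).reverse)

/-- `X` is left-maximal on the forward trie: it has two distinct left
extensions, or an occurrence beginning at the root. -/
def leftMaximalF (T : LTree n A) (X : List A) : Prop :=
  (∃ a b : A, a ≠ b ∧ (a :: X) ∈ T.SubstrD ∧ (b :: X) ∈ T.SubstrD) ∨
  (∃ v : Fin n, X = (T.strUp v).reverse)

/-- `Y` is left-maximal on the backward trie: two distinct left extensions,
or an occurrence beginning at a leaf. -/
def leftMaximalB (T : LTree n A) (Y : List A) : Prop :=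
  (∃ a b : A, a ≠ b ∧ (a :: Y) ∈ T.SubstrU ∧ (b :: Y) ∈ T.SubstrU) ∨
  (∃ v : Fin n, T.isLeaf v ∧ ∃ m : ℕ, Y = (T.strUp v).take m)

/-- `Y` is right-maximal on the backward trie: two distinct right extensions,
or an occurrence ending at the root. -/
def rightMaximalB (T : LTree n A) (Y : List A) : Prop :=
  (∃ a b : A, a ≠ b ∧ Y ++ [a] ∈ T.SubstrU ∧ Y ++ [b] ∈ T.SubstrU) ∨
  (∃ v : Fin n, Y = T.strUp v)

end LTree

namespace LTree

variable {n : ℕ} {A : Type*}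

theorem strUp_eq' (T : LTree n A) (v : Fin n) :
    T.strUp v = if _ : v.val = 0 then [] else T.label v :: T.strUp (T.parent v) := by
  rw [strUp]

theorem strUp_length_le (T : LTree n A) (v : Fin n) :
    (T.strUp v).length ≤ v.val := by
  by_cases h : v.val = 0
  · rw [strUp_eq', dif_pos h]; simp [h]
  · rw [strUp_eq', dif_neg h]
    have ih := strUp_length_le T (T.parent v)
    have hp := T.hp v h
    simp only [List.length_cons]
    omega
termination_by v.val
decreasing_by exact T.hp v h

theorem substrU_of_prefix (T : LTree n A) {s t : List A}
    (hs : s ∈ T.SubstrU) (h : t <+: s) : t ∈ T.SubstrU := by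
  obtain ⟨v, m, rfl⟩ := hs
  refine ⟨v, min t.length m, ?_⟩
  rw [← List.take_take, ← List.prefix_iff_eq_take.mp h]

theorem substrU_tail (T : LTree n A) {b : A} {s : List A}
    (h : (b :: s) ∈ T.SubstrU) : s ∈ T.SubstrU := by
  obtain ⟨v, m, hv⟩ := h
  have hv0 : v.val ≠ 0 := by
    intro h0; rw [strUp_eq', dif_pos h0] at hv; simp at hv
  rw [strUp_eq', dif_neg hv0] at hv
  cases m with
  | zero => simp at hv
  | succ m =>
    rw [List.take_succ_cons] at hv
    simp only [List.cons.injEq] at hv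
    exact ⟨T.parent v, m, hv.2⟩

theorem length_le_of_mem (T : LTree n A) {X : List A} (h : X ∈ T.SubstrU) :
    X.length ≤ n := by
  obtain ⟨v, m, rfl⟩ := h
  have h1 := T.strUp_length_le v
  have h2 := v.isLt
  rw [List.length_take]
  omega

theorem ext_unique (T : LTree n A) {X : List A} (hn : ¬ T.rightMaximalB X)
    {b c : A} (hb : X ++ [b] ∈ T.SubstrU) (hc : X ++ [c] ∈ T.SubstrU) : b = c := by
  by_contra hbc
  exact hn (Or.inl ⟨b, c, hbc, hb, hc⟩)

theorem ext_exists (T : LTree n A) {X : List A} (hX : X ∈ T.SubstrU)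
    (hn : ¬ T.rightMaximalB X) : ∃ b, X ++ [b] ∈ T.SubstrU := by
  obtain ⟨v, m, rfl⟩ := hX
  by_cases hm : (T.strUp v).length ≤ m
  · exact absurd (Or.inr ⟨v, (List.take_of_length_le hm)⟩) hn
  · push_neg at hm
    refine ⟨(T.strUp v).get ⟨m, hm⟩, v, m + 1, ?_⟩
    rw [← List.take_concat_get hm]
    simp [List.concat_eq_append]

theorem mem_of_rightMaximalB (T : LTree n A) {X : List A}
    (h : T.rightMaximalB X) : X ∈ T.SubstrU := by
  rcases h with ⟨b, c, _, hb, _⟩ | ⟨v, rfl⟩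
  · exact T.substrU_of_prefix hb (List.prefix_append X [b])
  · exact ⟨v, (T.strUp v).length, (List.take_length (l := T.strUp v)).symm⟩

theorem rm_of_rm_cons (T : LTree n A) {a : A} {U : List A}
    (h : T.rightMaximalB (a :: U)) : T.rightMaximalB U := by
  rcases h with ⟨b, c, hbc, hb, hc⟩ | ⟨v, hv⟩
  · exact Or.inl ⟨b, c, hbc, T.substrU_tail hb, T.substrU_tail hc⟩
  · have hv0 : v.val ≠ 0 := by
      intro h0; rw [strUp_eq', dif_pos h0] at hv; simp at hv
    rw [strUp_eq', dif_neg hv0] at hv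
    simp only [List.cons.injEq] at hv
    exact Or.inr ⟨T.parent v, hv.2⟩

open Classical in
noncomputable def chain (T : LTree n A) (X : List A) : ℕ → List A
  | 0 => X
  | k + 1 =>
    if h : ¬ T.rightMaximalB (chain T X k) ∧ ∃ b, chain T X k ++ [b] ∈ T.SubstrU
    then chain T X k ++ [h.2.choose]
    else chain T X k

theorem chain_mem (T : LTree n A) {X : List A} (hX : X ∈ T.SubstrU) (k : ℕ) :
    chain T X k ∈ T.SubstrU := by
  induction k with
  | zero => exact hX
  | succ k ih =>
    rw [chain]
    split
    · next h => exact h.2.choose_spec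
    · exact ih

theorem chain_prefix (T : LTree n A) (X : List A) (k : ℕ) : X <+: chain T X k := by
  induction k with
  | zero => exact List.prefix_rfl
  | succ k ih =>
    rw [chain]
    split
    · exact ih.trans (List.prefix_append _ _)
    · exact ih

theorem chain_length (T : LTree n A) {X : List A} (hX : X ∈ T.SubstrU) (k : ℕ)
    (h : ∀ j < k, ¬ T.rightMaximalB (chain T X j)) :
    (chain T X k).length = X.length + k := by
  induction k with
  | zero => rfl
  | succ k ih =>
    have hk : ¬ T.rightMaximalB (chain T X k) := h k (by omega)
    have hex := T.ext_exists (T.chain_mem hX k) hk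
    rw [chain, dif_pos ⟨hk, hex⟩, List.length_append,
      ih (fun j hj => h j (by omega))]
    simp
    omega

theorem chain_forced (T : LTree n A) {X W : List A} (hX : X ∈ T.SubstrU)
    (hW : W ∈ T.SubstrU) (hXW : X <+: W) (k : ℕ)
    (h : ∀ j < k, ¬ T.rightMaximalB (chain T X j))
    (hlen : X.length + k ≤ W.length) :
    chain T X k <+: W := by
  induction k with
  | zero => exact hXW
  | succ k ih =>
    have hk : ¬ T.rightMaximalB (chain T X k) := h k (by omega)
    have hpre : chain T X k <+: W := ih (fun j hj => h j (by omega)) (by omega)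
    have hlenk : (chain T X k).length = X.length + k :=
      T.chain_length hX k (fun j hj => h j (by omega))
    have hex := T.ext_exists (T.chain_mem hX k) hk
    obtain ⟨t, ht⟩ := hpre
    have htne : t ≠ [] := by
      intro h0
      rw [h0, List.append_nil] at ht
      have := congrArg List.length ht
      omega
    obtain ⟨c, t', rfl⟩ := List.exists_cons_of_ne_nil htne
    have hcmem : chain T X k ++ [c] ∈ T.SubstrU := by
      refine T.substrU_of_prefix hW ?_
      rw [← ht]
      exact ⟨t', by simp⟩
    have hcc : hex.choose = c := T.ext_unique hk hex.choose_spec hcmem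
    rw [chain, dif_pos ⟨hk, hex⟩, hcc, ← ht]
    exact ⟨t', by simp⟩

theorem chain_key (T : LTree n A) {X W : List A} (hX : X ∈ T.SubstrU)
    (hW : W ∈ T.SubstrU) (hWrm : T.rightMaximalB W) (hXW : X <+: W) (k : ℕ)
    (h : ∀ j < k, ¬ T.rightMaximalB (chain T X j)) :
    chain T X k <+: W := by
  by_cases hlen : X.length + k ≤ W.length
  · exact T.chain_forced hX hW hXW k h hlen
  · exfalso
    push_neg at hlen
    have hXl : X.length ≤ W.length := hXW.length_le
    have hjk : W.length - X.length < k := by omega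
    have hpre := T.chain_forced hX hW hXW (W.length - X.length)
      (fun i hi => h i (by omega)) (by omega)
    have hlj := T.chain_length hX (W.length - X.length)
      (fun i hi => h i (by omega))
    have heq : chain T X (W.length - X.length) = W :=
      hpre.eq_of_length (by omega)
    rw [← heq] at hWrm
    exact (h _ hjk) hWrm

end LTree


/-- if an explicit node `V` of the suffix tree of a backward
trie has a soft W-link for `a` (i.e. `a·V ∈ Substr(T_b)` but `a·V` is not
right-maximal), then `V` has a proper descendant `U` (an explicit node having
`V` as a proper prefix) with a hard W-link for `a`; the highest (shortest)
such descendant `U` is unique — it is a prefix of every such descendant — and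
for every explicit node `Z` on the path from `V` down to `U`, the W-link of
`Z` for `a` points to the same node `a·U`, i.e. `a·U` is the shortest
right-maximal extension of `a·Z`. -/
theorem stmt18 {n : ℕ} {A : Type*} (T : LTree n A) (a : A) (V : List A)
    (hV : V ∈ T.SubstrU) (hrV : T.rightMaximalB V)
    (hin : (a :: V) ∈ T.SubstrU) (hsoft : ¬ T.rightMaximalB (a :: V)) :
    ∃ U : List A, U ∈ T.SubstrU ∧ T.rightMaximalB U ∧ V <+: U ∧ V ≠ U ∧
      T.rightMaximalB (a :: U) ∧
      (∀ U' : List A, U' ∈ T.SubstrU → T.rightMaximalB U' → V <+: U' →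
        T.rightMaximalB (a :: U') → U <+: U') ∧
      (∀ Z : List A, Z ∈ T.SubstrU → T.rightMaximalB Z → V <+: Z → Z <+: U →
        (a :: Z) <+: (a :: U) ∧
        ∀ W : List A, W ∈ T.SubstrU → T.rightMaximalB W →
          (a :: Z) <+: W → (a :: U) <+: W) := by
  classical
  set X := a :: V with hXdef
  have hEx : ∃ k, T.rightMaximalB (LTree.chain T X k) := by
    by_contra hc
    push_neg at hc
    have hlen := T.chain_length hin (n + 1) (fun j _ => hc j)
    have hb := T.length_le_of_mem (T.chain_mem hin (n + 1))
    omega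
  set k := Nat.find hEx with hkdef
  have hkrm : T.rightMaximalB (LTree.chain T X k) := Nat.find_spec hEx
  have hlt : ∀ j < k, ¬ T.rightMaximalB (LTree.chain T X j) :=
    fun j hj => Nat.find_min hEx hj
  have hk0 : 0 < k := by
    rcases Nat.eq_zero_or_pos k with h0 | h
    · exfalso
      apply hsoft
      have := hkrm
      rw [h0] at this
      exact this
    · exact h
  obtain ⟨t, ht⟩ := T.chain_prefix X k
  have hCU : LTree.chain T X k = a :: (V ++ t) := by
    rw [← ht]; rfl
  have hclen : (LTree.chain T X k).length = X.length + k := T.chain_length hin k hlt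
  refine ⟨V ++ t, ?_, ?_, ⟨t, rfl⟩, ?_, ?_, ?_, ?_⟩
  · exact T.substrU_tail (hCU ▸ T.chain_mem hin k)
  · exact T.rm_of_rm_cons (hCU ▸ hkrm)
  · intro hVe
    have := congrArg List.length hVe
    rw [hCU] at hclen
    simp only [List.length_cons, List.length_append] at this hclen
    simp only [hXdef, List.length_cons] at hclen
    omega
  · exact hCU ▸ hkrm
  · intro U' hU'm hU'rm hVU' haU'rm
    have hW : (a :: U') ∈ T.SubstrU := T.mem_of_rightMaximalB haU'rm
    have hXW : X <+: (a :: U') := List.cons_prefix_cons.mpr ⟨rfl, hVU'⟩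
    have hkey := T.chain_key hin hW haU'rm hXW k hlt
    rw [hCU] at hkey
    exact (List.cons_prefix_cons.mp hkey).2
  · intro Z hZm hZrm hVZ hZU
    refine ⟨List.cons_prefix_cons.mpr ⟨rfl, hZU⟩, ?_⟩
    intro W hWm hWrm haZW
    have hXW : X <+: W :=
      (List.cons_prefix_cons.mpr ⟨rfl, hVZ⟩ : a :: V <+: a :: Z).trans haZW
    exact hCU ▸ T.chain_key hin hWm hWrm hXW k hlt
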